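/- For any integers d ≥ 1 and n ≥ 2, the polynomial (f_d)^n = (1 + t + … + t^d)^n is strictly unimodal. -/

import Mathlib

open Polynomial

/-- `fpoly d` is the polynomial `f_d = 1 + t + t^2 + ⋯ + t^d`. -/
noncomputable def fpoly (d : ℕ) : Polynomial ℝ :=
  ∑ i ∈ Finset.range (d + 1), Polynomial.X ^ i

/-- A sequence `a_0, …, a_d` is strictly unimodal if, for `d = 2m`,
`a_0 < a_1 < ⋯ < a_m > a_{m+1} > ⋯ > a_{2m}`, and for `d = 2m+1`,
`a_0 < a_1 < ⋯ < a_m = a_{m+1} > a_{m+2} > ⋯ > a_{2m+1}`. -/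
def StrictlyUnimodalSeq (d : ℕ) (a : ℕ → ℝ) : Prop :=
  (∀ i, i < d / 2 → a i < a (i + 1)) ∧
  (Odd d → a (d / 2) = a (d / 2 + 1)) ∧
  (∀ i, (d + 1) / 2 ≤ i → i < d → a (i + 1) < a i)

/-- The sequence `a` strictly increases on `[0, e]`, is constant on `[e, p]`,
and strictly decreases on `[p, D]`. -/
def IncConstDec (a : ℕ → ℝ) (e p D : ℕ) : Prop :=
  (∀ i, i < e → a i < a (i + 1)) ∧
  (∀ i, e ≤ i → i < p → a i = a (i + 1)) ∧
  (∀ i, p ≤ i → i < D → a (i + 1) < a i)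

lemma fpoly_coeff (d i : ℕ) : (fpoly d).coeff i = if i ≤ d then 1 else 0 := by
  rw [fpoly, Polynomial.finset_sum_coeff]
  simp only [Polynomial.coeff_X_pow]
  rw [Finset.sum_ite_eq (Finset.range (d+1)) i (fun _ => (1:ℝ))]
  simp [Nat.lt_succ_iff]

lemma fpoly_natDegree_le (d : ℕ) : (fpoly d).natDegree ≤ d :=
  Polynomial.natDegree_le_iff_coeff_eq_zero.mpr (fun m hm => by
    rw [fpoly_coeff]; simp; omega)

lemma fpoly_pow_natDegree_le (d n : ℕ) : (fpoly d ^ n).natDegree ≤ n * d :=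
  le_trans (Polynomial.natDegree_pow_le) (Nat.mul_le_mul_left n (fpoly_natDegree_le d))

lemma fpoly_pow_coeff_zero (d n k : ℕ) (h : n * d < k) : (fpoly d ^ n).coeff k = 0 :=
  Polynomial.coeff_eq_zero_of_natDegree_lt (lt_of_le_of_lt (fpoly_pow_natDegree_le d n) h)

lemma fpoly_mul_coeff (d : ℕ) (g : Polynomial ℝ) (k : ℕ) :
    (fpoly d * g).coeff k
      = ∑ i ∈ Finset.range (k+1), (if i ≤ d then (1:ℝ) else 0) * g.coeff (k - i) := by
  rw [Polynomial.coeff_mul, Finset.Nat.sum_antidiagonal_eq_sum_range_succ_mk]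
  exact Finset.sum_congr rfl (fun i _ => by rw [fpoly_coeff])

lemma window (d : ℕ) (g : Polynomial ℝ) (k : ℕ) :
    (fpoly d * g).coeff (k+1) - (fpoly d * g).coeff k
      = g.coeff (k+1) - (if d ≤ k then g.coeff (k - d) else 0) := by
  rw [fpoly_mul_coeff, fpoly_mul_coeff]
  rw [Finset.sum_range_succ' (fun i => (if i ≤ d then (1:ℝ) else 0) * g.coeff (k + 1 - i)) (k+1)]
  have h1 : ∀ i ∈ Finset.range (k+1),
      (if i + 1 ≤ d then (1:ℝ) else 0) * g.coeff (k + 1 - (i+1))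
        - (if i ≤ d then (1:ℝ) else 0) * g.coeff (k - i)
      = -(if i = d then g.coeff (k - i) else 0) := by
    intro i _
    have : k + 1 - (i + 1) = k - i := by omega
    rw [this]
    by_cases h : i = d
    · subst h; simp
    · by_cases h2 : i ≤ d
      · have : i + 1 ≤ d := by omega
        simp [h2, this, h]
      · have : ¬ (i + 1 ≤ d) := by omega
        simp [h2, this, h]
  have h2 : ∑ i ∈ Finset.range (k+1), (if i + 1 ≤ d then (1:ℝ) else 0) * g.coeff (k + 1 - (i+1))
      = ∑ i ∈ Finset.range (k+1), ((if i ≤ d then (1:ℝ) else 0) * g.coeff (k - i)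
          - (if i = d then g.coeff (k - i) else 0)) := by
    refine Finset.sum_congr rfl (fun i hi => ?_)
    have := h1 i hi
    linarith
  rw [h2, Finset.sum_sub_distrib]
  have h3 : ∑ i ∈ Finset.range (k+1), (if i = d then g.coeff (k - i) else 0)
      = if d ≤ k then g.coeff (k - d) else 0 := by
    rw [Finset.sum_ite_eq' (Finset.range (k+1)) d (fun i => g.coeff (k - i))]
    simp [Nat.lt_succ_iff]
  rw [h3]
  simp
  ring

lemma fpoly_pow_coeff_nonneg (d n k : ℕ) : 0 ≤ (fpoly d ^ n).coeff k := by
  induction n generalizing k with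
  | zero => simp [Polynomial.coeff_one]; positivity
  | succ n ih =>
      rw [pow_succ', fpoly_mul_coeff]
      apply Finset.sum_nonneg
      intro i _
      have := ih (k - i)
      positivity

lemma fpoly_pow_coeff_pos (d n k : ℕ) (hn : 1 ≤ n) (hk : k ≤ n * d) :
    0 < (fpoly d ^ n).coeff k := by
  induction n generalizing k with
  | zero => omega
  | succ n ih =>
      rw [pow_succ', fpoly_mul_coeff]
      rcases Nat.eq_zero_or_pos n with h0 | h0
      · subst h0
        simp only [pow_zero, Polynomial.coeff_one]
        apply Finset.sum_pos'
        · intro i _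
          by_cases h : i ≤ d <;> by_cases h2 : k - i = 0 <;> simp [h, h2]
        · refine ⟨k, by simp, ?_⟩
          have hkd : k ≤ d := by simpa using hk
          simp [hkd]
      · apply Finset.sum_pos'
        · intro i _
          have := fpoly_pow_coeff_nonneg d n (k - i)
          by_cases h : i ≤ d <;> simp [h]
          exact this
        · have hmul : (n+1) * d = n * d + d := by ring
          by_cases hkn : k ≤ n * d
          · exact ⟨0, by simp, by simpa using ih k h0 hkn⟩
          · refine ⟨k - n * d, ?_, ?_⟩
            · simp
            · have h1 : k - n * d ≤ d := by omega
              have h2 : k - (k - n * d) = n * d := by omega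
              rw [h2]
              simp [h1]
              exact ih (n*d) h0 le_rfl

lemma fpoly_reflect (d : ℕ) : Polynomial.reflect d (fpoly d) = fpoly d := by
  ext i
  rw [Polynomial.coeff_reflect, fpoly_coeff, fpoly_coeff]
  rw [← Polynomial.revAtFun_eq]; unfold Polynomial.revAtFun
  by_cases h : i ≤ d
  · simp [h, Nat.sub_le]
  · simp [h]

lemma fpoly_pow_reflect (d n : ℕ) :
    Polynomial.reflect (n * d) (fpoly d ^ n) = fpoly d ^ n := by
  induction n with
  | zero => simp
  | succ n ih =>
      have h : (n+1) * d = n * d + d := by ring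
      rw [h, pow_succ,
        Polynomial.reflect_mul _ _ (fpoly_pow_natDegree_le d n) (fpoly_natDegree_le d),
        ih, fpoly_reflect]

lemma fpoly_pow_symm (d n j : ℕ) (hj : j ≤ n * d) :
    (fpoly d ^ n).coeff j = (fpoly d ^ n).coeff (n * d - j) := by
  conv_lhs => rw [← fpoly_pow_reflect d n]
  rw [Polynomial.coeff_reflect]
  congr 1
  rw [← Polynomial.revAtFun_eq]; unfold Polynomial.revAtFun
  simp [hj]

lemma chain_lt (c : ℕ → ℝ) (m : ℕ) (h : ∀ i, i < m → c i < c (i + 1))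
    {u v : ℕ} (huv : u < v) (hv : v ≤ m) : c u < c v := by
  induction v with
  | zero => omega
  | succ v ih =>
      rcases Nat.lt_or_ge u v with h1 | h1
      · exact lt_trans (ih h1 (by omega)) (h v (by omega))
      · have : u = v := by omega
        subst this
        exact h u (by omega)

lemma lemB (c : ℕ → ℝ) (N : ℕ)
    (hsym : ∀ j, j ≤ N → c j = c (N - j))
    (hinc : ∀ i, i < N / 2 → c i < c (i + 1))
    {u v : ℕ} (huv : u < v) (hsum : u + v < N) (hv : v ≤ N) :
    c u < c v := by
  by_cases h : v ≤ N / 2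
  · exact chain_lt c (N/2) hinc huv h
  · have h1 : c v = c (N - v) := hsym v hv
    rw [h1]
    refine chain_lt c (N/2) hinc ?_ ?_ <;> omega

/-- For any `d ≥ 1` and `n ≥ 2`, the polynomial `(f_d)^n = (1 + t + ⋯ + t^d)^n`
is strictly unimodal. -/
theorem fpoly_pow_strictlyUnimodal (d n : ℕ) (hd : 1 ≤ d) (hn : 2 ≤ n) :
    StrictlyUnimodalSeq (n * d) ((fpoly d ^ n).coeff) := by
  induction n, hn using Nat.le_induction with
  | base =>
      refine ⟨?_, ?_, ?_⟩
      · intro k hk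
        have hw := window d (fpoly d) k
        rw [← pow_two] at hw
        have h1 : k + 1 ≤ d := by omega
        have h2 : ¬ d ≤ k := by omega
        rw [fpoly_coeff, if_pos h1, if_neg h2] at hw
        linarith
      · intro hodd
        obtain ⟨m, hm⟩ := hodd
        omega
      · intro i h1 h2
        have hw := window d (fpoly d) i
        rw [← pow_two] at hw
        have hd1 : d ≤ i := by omega
        have hd2 : ¬ (i + 1 ≤ d) := by omega
        have hd3 : i - d ≤ d := by omega
        rw [fpoly_coeff, fpoly_coeff, if_neg hd2, if_pos hd1, if_pos hd3] at hw
        linarith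
  | succ n hn2 ih =>
      obtain ⟨inc, mid, dec⟩ := ih
      have hpow : fpoly d ^ (n+1) = fpoly d * fpoly d ^ n := pow_succ' _ _
      have hNd : 2 * d ≤ n * d := Nat.mul_le_mul_right d hn2
      have hN' : (n+1) * d = n * d + d := by ring
      refine ⟨?_, ?_, ?_⟩
      · intro k hk
        have hw := window d (fpoly d ^ n) k
        rw [← hpow] at hw
        by_cases hcase : d ≤ k
        · rw [if_pos hcase] at hw
          have hlt : (fpoly d ^ n).coeff (k - d) < (fpoly d ^ n).coeff (k + 1) :=
            lemB _ (n*d) (fun j hj => fpoly_pow_symm d n j hj) inc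
              (by omega) (by omega) (by omega)
          linarith
        · rw [if_neg hcase] at hw
          have hp : 0 < (fpoly d ^ n).coeff (k + 1) :=
            fpoly_pow_coeff_pos d n (k+1) (by omega) (by omega)
          linarith
      · intro hodd
        obtain ⟨m, hm⟩ := hodd
        set k := ((n+1) * d) / 2 with hkdef
        have hk : (n+1) * d = 2 * k + 1 := by omega
        have hw := window d (fpoly d ^ n) k
        rw [← hpow] at hw
        have hdk : d ≤ k := by omega
        rw [if_pos hdk] at hw
        have hsym := fpoly_pow_symm d n (k+1) (by omega)
        have heq : n * d - (k + 1) = k - d := by omega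
        rw [heq] at hsym
        linarith
      · intro i h1 h2
        have hw := window d (fpoly d ^ n) i
        rw [← hpow] at hw
        have hdi : d ≤ i := by omega
        rw [if_pos hdi] at hw
        by_cases hiN : i + 1 ≤ n * d
        · have hsym := fpoly_pow_symm d n (i+1) hiN
          have hlt : (fpoly d ^ n).coeff (n * d - (i + 1)) < (fpoly d ^ n).coeff (i - d) :=
            lemB _ (n*d) (fun j hj => fpoly_pow_symm d n j hj) inc
              (by omega) (by omega) (by omega)
          linarith
        · have hz : (fpoly d ^ n).coeff (i + 1) = 0 :=
            fpoly_pow_coeff_zero d n (i+1) (by omega)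
          have hp : 0 < (fpoly d ^ n).coeff (i - d) :=
            fpoly_pow_coeff_pos d n (i - d) (by omega) (by omega)
          linarith
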